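/- arXiv:1308.3968 — 5 statements merged into one kernel-verified Lean document; each statement's English description precedes it below -/
import Mathlib

section
/- Let Θ be a nonempty compact subset of ℝ^p, let Y₁,…,Yₙ be points of ℝ^d, and let f : ℝ^d × Θ → ℝ be such that θ ↦ f(y;θ) is continuous for each y. Define Γ = {(f(Y₁;θ),…,f(Yₙ;θ)) : θ ∈ Θ} ⊆ ℝⁿ. Then the set of mixture value vectors {( ∫_Θ f(Y₁;θ) dG(θ), …, ∫_Θ f(Yₙ;θ) dG(θ) ) : G a Borel probability measure on Θ} equals the convex hull of Γ. -/
open MeasureTheory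

/-- Convex hull of a compact subset of `Fin n → ℝ` is compact (Carathéodory). -/
lemma aux_isCompact_convexHull {n : ℕ} {K : Set (Fin n → ℝ)} (hK : IsCompact K) :
    IsCompact (convexHull ℝ K) := by
  classical
  rcases K.eq_empty_or_nonempty with rfl | ⟨x₀, hx₀⟩
  · simpa [convexHull_empty] using isCompact_empty
  · set m := n + 1 with hm
    set φ : (Fin m → ℝ) × (Fin m → (Fin n → ℝ)) → (Fin n → ℝ) :=
      fun q => ∑ i, q.1 i • q.2 i with hφdef
    have hφ : Continuous φ := by
      apply continuous_finset_sum
      intro i _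
      exact ((continuous_apply i).comp continuous_fst).smul
        ((continuous_apply i).comp continuous_snd)
    have hD : IsCompact ((stdSimplex ℝ (Fin m)) ×ˢ (Set.univ.pi fun _ : Fin m => K)) :=
      (isCompact_stdSimplex (𝕜 := ℝ) (ι := Fin m)).prod (isCompact_univ_pi fun _ => hK)
    have himg : convexHull ℝ K
        = φ '' ((stdSimplex ℝ (Fin m)) ×ˢ (Set.univ.pi fun _ : Fin m => K)) := by
      apply Set.Subset.antisymm
      · intro x hx
        obtain ⟨ι, hfin, z, w, hrange, hindep, hpos, hsum, hcomb⟩ :=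
          eq_pos_convex_span_of_mem_convexHull hx
        have hcard : Fintype.card ι ≤ m := by
          have h1 := hindep.card_le_finrank_succ
          have h2 : Module.finrank ℝ ↥(vectorSpan ℝ (Set.range z)) ≤ n := by
            have := Submodule.finrank_le (vectorSpan ℝ (Set.range z))
            simpa [Module.finrank_fin_fun] using this
          omega
        obtain ⟨e⟩ : Nonempty (ι ↪ Fin m) := by
          rw [Function.Embedding.nonempty_iff_card_le]
          simpa using hcard
        set w' : Fin m → ℝ := Function.extend e w 0 with hw'def
        set z' : Fin m → (Fin n → ℝ) := Function.extend e z (fun _ => x₀) with hz'def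
        have hw'e : ∀ i, w' (e i) = w i := by
          intro i
          rw [hw'def]
          exact e.injective.extend_apply _ _ _
        have hz'e : ∀ i, z' (e i) = z i := by
          intro i
          rw [hz'def]
          exact e.injective.extend_apply _ _ _
        have hw'0 : ∀ j, (¬∃ i, e i = j) → w' j = 0 := by
          intro j hj
          rw [hw'def]
          exact Function.extend_apply' _ _ _ hj
        have hsum' : ∀ {M : Type} [AddCommMonoid M] (F : Fin m → M),
            (∀ j, (¬∃ i, e i = j) → F j = 0) → ∑ j, F j = ∑ i, F (e i) := by
          intro M _ F h0
          rw [show (Finset.univ : Finset (Fin m))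
              = Finset.univ.image e ∪ (Finset.univ \ Finset.univ.image e) by
            simp [Finset.union_sdiff_of_subset (Finset.subset_univ _)]]
          rw [Finset.sum_union (Finset.disjoint_sdiff)]
          have h2 : ∑ j ∈ Finset.univ \ Finset.univ.image e, F j = 0 := by
            apply Finset.sum_eq_zero
            intro j hj
            apply h0
            simp only [Finset.mem_sdiff, Finset.mem_image, Finset.mem_univ, true_and] at hj
            simpa using hj
          rw [h2, add_zero, Finset.sum_image (fun a _ b _ h => e.injective h)]
        have hw'sum : ∑ j, w' j = 1 := by
          rw [hsum' w' hw'0]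
          simpa only [hw'e] using hsum
        have hw'mem : w' ∈ stdSimplex ℝ (Fin m) := by
          refine ⟨fun j => ?_, hw'sum⟩
          by_cases hj : ∃ i, e i = j
          · obtain ⟨i, rfl⟩ := hj
            rw [hw'e]
            exact (hpos i).le
          · rw [hw'0 j hj]
        have hz'mem : z' ∈ Set.univ.pi fun _ : Fin m => K := by
          intro j _
          by_cases hj : ∃ i, e i = j
          · obtain ⟨i, rfl⟩ := hj
            rw [hz'e]
            exact hrange ⟨i, rfl⟩
          · rw [hz'def, Function.extend_apply' z _ j hj]
            exact hx₀
        refine ⟨(w', z'), ⟨hw'mem, hz'mem⟩, ?_⟩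
        show ∑ j, w' j • z' j = x
        rw [hsum' (fun j => w' j • z' j)
          (fun j hj => by show w' j • z' j = 0; rw [hw'0 j hj, zero_smul])]
        simp only [hw'e, hz'e]
        exact hcomb
      · rintro _ ⟨⟨w, z⟩, ⟨hw, hz⟩, rfl⟩
        exact (convex_convexHull ℝ K).sum_mem (fun i _ => hw.1 i) hw.2
          (fun i _ => subset_convexHull ℝ K (hz i (Set.mem_univ i)))
    rw [himg]
    exact hD.image hφ

/-- A function continuous on a compact set is integrable w.r.t. any finite measure
supported on that set. -/
lemma aux_integrable {p : ℕ} {Θ : Set (EuclideanSpace ℝ (Fin p))} (hcomp : IsCompact Θ)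
    {E : Type*} [NormedAddCommGroup E] {g : EuclideanSpace ℝ (Fin p) → E}
    (hg : ContinuousOn g Θ) (G : Measure (EuclideanSpace ℝ (Fin p))) [IsFiniteMeasure G]
    (hG : G Θᶜ = 0) : Integrable g G := by
  have hae : ∀ᵐ θ ∂G, θ ∈ Θ := by
    rw [MeasureTheory.ae_iff]
    exact hG
  have hrest : G.restrict Θ = G := Measure.restrict_eq_self_of_ae_mem hae
  have hms : AEStronglyMeasurable g G := by
    rw [← hrest]
    exact hg.aestronglyMeasurable hcomp.isClosed.measurableSet
  obtain ⟨C, hC⟩ := hcomp.exists_bound_of_continuousOn hg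
  exact ⟨hms, HasFiniteIntegral.of_bounded (hae.mono fun θ hθ => hC θ hθ)⟩

/-- The set of mixture value vectors
`(∫ f(Y₁;θ) dG(θ), …, ∫ f(Yₙ;θ) dG(θ))`, where `G` ranges over Borel probability
measures on a nonempty compact set `Θ ⊆ ℝ^p`, equals the convex hull of the set
`Γ = {(f(Y₁;θ),…,f(Yₙ;θ)) : θ ∈ Θ}`. -/
theorem stmt_0 {p d n : ℕ} (Θ : Set (EuclideanSpace ℝ (Fin p)))
    (hne : Θ.Nonempty) (hcomp : IsCompact Θ)
    (Y : Fin n → EuclideanSpace ℝ (Fin d))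
    (f : EuclideanSpace ℝ (Fin d) → EuclideanSpace ℝ (Fin p) → ℝ)
    (hf : ∀ y, ContinuousOn (f y) Θ) :
    {v : Fin n → ℝ | ∃ G : Measure (EuclideanSpace ℝ (Fin p)),
        IsProbabilityMeasure G ∧ G Θᶜ = 0 ∧
        v = fun i => ∫ θ, f (Y i) θ ∂G}
      = convexHull ℝ {v : Fin n → ℝ | ∃ θ ∈ Θ, v = fun i => f (Y i) θ} := by
  classical
  set g : EuclideanSpace ℝ (Fin p) → (Fin n → ℝ) := fun θ i => f (Y i) θ with hgdef
  have hgc : ContinuousOn g Θ := continuousOn_pi.2 fun i => hf (Y i)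
  have hΓ : {v : Fin n → ℝ | ∃ θ ∈ Θ, v = fun i => f (Y i) θ} = g '' Θ := by
    ext v
    constructor
    · rintro ⟨θ, hθ, rfl⟩; exact ⟨θ, hθ, rfl⟩
    · rintro ⟨θ, hθ, rfl⟩; exact ⟨θ, hθ, rfl⟩
  have hΓc : IsCompact (g '' Θ) := hcomp.image_of_continuousOn hgc
  have hhull : IsCompact (convexHull ℝ (g '' Θ)) := aux_isCompact_convexHull hΓc
  apply Set.Subset.antisymm
  · -- mixtures ⊆ convex hull
    rintro v ⟨G, hP, hG0, rfl⟩
    rw [hΓ]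
    have hae : ∀ᵐ θ ∂G, θ ∈ Θ := by
      rw [MeasureTheory.ae_iff]
      exact hG0
    have hint : Integrable g G := aux_integrable hcomp hgc G hG0
    have hmem : ∀ᵐ θ ∂G, g θ ∈ convexHull ℝ (g '' Θ) :=
      hae.mono fun θ hθ => subset_convexHull ℝ _ ⟨θ, hθ, rfl⟩
    have hkey := (convex_convexHull ℝ (g '' Θ)).integral_mem hhull.isClosed hmem hint
    have heq : (fun i => ∫ θ, f (Y i) θ ∂G) = ∫ θ, g θ ∂G := by
      funext i
      exact (ContinuousLinearMap.proj (R := ℝ) (φ := fun _ : Fin n => ℝ)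
        i).integral_comp_comm hint
    rw [heq]
    exact hkey
  · -- convex hull ⊆ mixtures
    apply convexHull_min
    · rintro v ⟨θ, hθ, rfl⟩
      refine ⟨Measure.dirac θ, inferInstance, ?_, ?_⟩
      · rw [Measure.dirac_apply' θ hcomp.isClosed.measurableSet.compl]
        simp [hθ]
      · funext i
        exact (integral_dirac (fun θ' => f (Y i) θ') θ).symm
    · rintro x ⟨G₁, hP₁, h₁0, rfl⟩ y ⟨G₂, hP₂, h₂0, rfl⟩ a b ha hb hab
      refine ⟨ENNReal.ofReal a • G₁ + ENNReal.ofReal b • G₂, ?_, ?_, ?_⟩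
      · constructor
        simp only [Measure.add_apply, Measure.smul_apply, measure_univ, smul_eq_mul, mul_one]
        rw [← ENNReal.ofReal_add ha hb, hab, ENNReal.ofReal_one]
      · simp [Measure.add_apply, Measure.smul_apply, h₁0, h₂0]
      · funext i
        have hi₁ : Integrable (f (Y i)) G₁ := aux_integrable hcomp (hf (Y i)) G₁ h₁0
        have hi₂ : Integrable (f (Y i)) G₂ := aux_integrable hcomp (hf (Y i)) G₂ h₂0
        simp only [Pi.add_apply, Pi.smul_apply, smul_eq_mul]
        rw [integral_add_measure (hi₁.smul_measure ENNReal.ofReal_ne_top)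
            (hi₂.smul_measure ENNReal.ofReal_ne_top),
          integral_smul_measure, integral_smul_measure,
          ENNReal.toReal_ofReal ha, ENNReal.toReal_ofReal hb]
        simp [smul_eq_mul]
end

section
/- Let Θ be a nonempty compact subset of ℝ^p, let Y₁,…,Yₙ be points of ℝ^d, let f : ℝ^d × Θ → ℝ be such that θ ↦ f(y;θ) is continuous for each y, and let ĝ : ℝ^d → ℝ be any function. Then the minimum over all Borel probability measures G on Θ of the criterion (1/n) Σ_{i=1}^n ( ĝ(Y_i) − ∫_Θ f(Y_i;θ) dG(θ) )² exists, and there is a finitely supported probability measure Ĝ on Θ with at most n+1 atoms such that for every Borel probability measure G on Θ, (1/n) Σ_{i=1}^n ( ĝ(Y_i) − ∫_Θ f(Y_i;θ) dĜ(θ) )² ≤ (1/n) Σ_{i=1}^n ( ĝ(Y_i) − ∫_Θ f(Y_i;θ) dG(θ) )². -/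
open MeasureTheory

/-- Padding a convex combination of `m ≤ N` points of `K` to one of exactly `N` points. -/
lemma pad_combo {E : Type*} [AddCommMonoid E] [Module ℝ E] {K : Set E} (hK : K.Nonempty)
    {m N : ℕ} (hmN : m ≤ N) (w : Fin m → ℝ) (z : Fin m → E)
    (hw0 : ∀ i, 0 ≤ w i) (hw1 : ∑ i, w i = 1) (hz : ∀ i, z i ∈ K) :
    ∃ (w' : Fin N → ℝ) (z' : Fin N → E), (∀ s, 0 ≤ w' s) ∧ (∑ s, w' s = 1) ∧
      (∀ s, z' s ∈ K) ∧ ∑ s, w' s • z' s = ∑ i, w i • z i := by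
  obtain ⟨z0, hz0⟩ := hK
  set gw : ℕ → ℝ := fun k => if h : k < m then w ⟨k, h⟩ else 0 with hgw
  set gv : ℕ → E := fun k => if h : k < m then w ⟨k, h⟩ • z ⟨k, h⟩ else 0 with hgv
  refine ⟨fun s => gw s, fun s => if h : (s : ℕ) < m then z ⟨s, h⟩ else z0, ?_, ?_, ?_, ?_⟩
  · intro s; by_cases h : (s : ℕ) < m <;> simp [hgw, h, hw0]
  · have h1 : ∑ s : Fin N, gw s = ∑ k ∈ Finset.range N, gw k :=
      Fin.sum_univ_eq_sum_range gw N
    have h2 : ∑ k ∈ Finset.range N, gw k = ∑ k ∈ Finset.range m, gw k := by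
      refine (Finset.sum_subset (Finset.range_subset_range.2 hmN) ?_).symm
      intro k _ hk
      simp only [Finset.mem_range] at hk
      simp [hgw, hk]
    have h3 : ∑ k ∈ Finset.range m, gw k = ∑ i : Fin m, w i := by
      rw [← Fin.sum_univ_eq_sum_range gw m]
      exact Finset.sum_congr rfl fun i _ => by simp [hgw, i.isLt]
    rw [h1, h2, h3, hw1]
  · intro s; by_cases h : (s : ℕ) < m <;> simp [h, hz, hz0]
  · have he : ∀ s : Fin N, gw s • (if h : (s : ℕ) < m then z ⟨s, h⟩ else z0) = gv s := by
      intro s; by_cases h : (s : ℕ) < m <;> simp [hgw, hgv, h]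
    rw [Finset.sum_congr rfl fun s _ => he s]
    have h1 : ∑ s : Fin N, gv s = ∑ k ∈ Finset.range N, gv k :=
      Fin.sum_univ_eq_sum_range gv N
    have h2 : ∑ k ∈ Finset.range N, gv k = ∑ k ∈ Finset.range m, gv k := by
      refine (Finset.sum_subset (Finset.range_subset_range.2 hmN) ?_).symm
      intro k _ hk
      simp only [Finset.mem_range] at hk
      simp [hgv, hk]
    have h3 : ∑ k ∈ Finset.range m, gv k = ∑ i : Fin m, w i • z i := by
      rw [← Fin.sum_univ_eq_sum_range gv m]
      exact Finset.sum_congr rfl fun i _ => by simp [hgv, i.isLt]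
    rw [h1, h2, h3]

/-- The least-squares projection criterion over all Borel probability
measures on a compact `Θ` attains its minimum at a finitely supported mixing
distribution with at most `n+1` atoms. -/
theorem stmt_1 {p d n : ℕ} (Θ : Set (EuclideanSpace ℝ (Fin p)))
    (hne : Θ.Nonempty) (hcomp : IsCompact Θ)
    (Y : Fin n → EuclideanSpace ℝ (Fin d))
    (f : EuclideanSpace ℝ (Fin d) → EuclideanSpace ℝ (Fin p) → ℝ)
    (hf : ∀ y, ContinuousOn (f y) Θ)
    (g : EuclideanSpace ℝ (Fin d) → ℝ) :
    ∃ (S : ℕ) (θs : Fin S → EuclideanSpace ℝ (Fin p)) (π : Fin S → ℝ),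
      S ≤ n + 1 ∧ (∀ s, θs s ∈ Θ) ∧ (∀ s, 0 ≤ π s) ∧ (∑ s, π s = 1) ∧
      ∀ G : Measure (EuclideanSpace ℝ (Fin p)),
        IsProbabilityMeasure G → G Θᶜ = 0 →
        (1 / (n : ℝ)) * ∑ i, (g (Y i) - ∑ s, π s * f (Y i) (θs s)) ^ 2 ≤
          (1 / (n : ℝ)) * ∑ i, (g (Y i) - ∫ θ, f (Y i) θ ∂G) ^ 2 := by
  classical
  set F : EuclideanSpace ℝ (Fin p) → (Fin n → ℝ) := fun θ i => f (Y i) θ with hFdef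
  have hFcont : ContinuousOn F Θ := by
    rw [continuousOn_pi]; exact fun i => hf (Y i)
  set K : Set (Fin n → ℝ) := F '' Θ with hKdef
  have hKcomp : IsCompact K := hcomp.image_of_continuousOn hFcont
  have hKne : K.Nonempty := hne.image F
  -- The set of convex combinations of `n+1` points of `K`.
  set T : Set ((Fin (n + 1) → ℝ) × (Fin (n + 1) → (Fin n → ℝ))) :=
    (stdSimplex ℝ (Fin (n + 1))) ×ˢ (Set.univ.pi fun _ => K) with hTdef
  have hTcomp : IsCompact T :=
    (isCompact_stdSimplex _ _).prod (isCompact_univ_pi fun _ => hKcomp)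
  set Ψ : ((Fin (n + 1) → ℝ) × (Fin (n + 1) → (Fin n → ℝ))) → (Fin n → ℝ) :=
    fun q => ∑ s, q.1 s • q.2 s with hΨdef
  have hΨcont : Continuous Ψ := by
    apply continuous_finset_sum
    intro s _
    exact ((continuous_apply s).comp continuous_fst).smul
      ((continuous_apply s).comp continuous_snd)
  set D : Set (Fin n → ℝ) := Ψ '' T with hDdef
  have hDcomp : IsCompact D := hTcomp.image hΨcont
  -- the convex hull of K is contained in D (Carathéodory)
  have hhullD : convexHull ℝ K ⊆ D := by
    intro x hx
    obtain ⟨ι, hι, z, w, hzK, hai, hw0, hw1, hzw⟩ :=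
      eq_pos_convex_span_of_mem_convexHull hx
    have hcard : Fintype.card ι ≤ n + 1 := by
      refine hai.card_le_finrank_succ.trans ?_
      have h1 : Module.finrank ℝ (vectorSpan ℝ (Set.range z)) ≤
          Module.finrank ℝ (Fin n → ℝ) := Submodule.finrank_le _
      have h2 : Module.finrank ℝ (Fin n → ℝ) = n := Module.finrank_fin_fun ℝ
      omega
    set m := Fintype.card ι with hm
    have e : ι ≃ Fin m := Fintype.equivFin ι
    obtain ⟨w', z', hw'0, hw'1, hz', hsum⟩ :=
      pad_combo hKne hcard (w ∘ e.symm) (z ∘ e.symm)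
        (fun i => (hw0 _).le)
        (by simp only [Function.comp_def]; rw [Equiv.sum_comp e.symm w]; exact hw1)
        (fun i => hzK (Set.mem_range_self _))
    refine ⟨(w', z'), ⟨⟨hw'0, hw'1⟩, fun s _ => hz' s⟩, ?_⟩
    show ∑ s, w' s • z' s = x
    rw [hsum, ← hzw]
    simp only [Function.comp_def]
    exact Equiv.sum_comp e.symm (fun i => w i • z i)
  have hDne : D.Nonempty := hne.image F |>.mono (subset_convexHull ℝ K) |>.mono hhullD
  -- minimize the criterion over D
  set Φ : (Fin n → ℝ) → ℝ := fun v => ∑ i, (g (Y i) - v i) ^ 2 with hΦdef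
  have hΦcont : Continuous Φ := by
    apply continuous_finset_sum
    intro i _
    exact (continuous_const.sub (continuous_apply i)).pow 2
  obtain ⟨v, hvD, hvmin⟩ := hDcomp.exists_isMinOn hDne hΦcont.continuousOn
  obtain ⟨q, hqT, hqv⟩ := hvD
  -- extract atoms
  have hq1 := hqT.1
  have hq2 : ∀ s, q.2 s ∈ K := fun s => hqT.2 s (Set.mem_univ s)
  choose θs hθsΘ hθsF using fun s => hq2 s
  refine ⟨n + 1, θs, q.1, le_refl _, hθsΘ, hq1.1, hq1.2, ?_⟩
  intro G hGprob hG0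
  have hΘmeas : MeasurableSet Θ := hcomp.isClosed.measurableSet
  have hae : ∀ᵐ θ ∂G, θ ∈ Θ := by
    rw [ae_iff]
    exact hG0
  have hres : G.restrict Θ = G := Measure.restrict_eq_self_of_ae_mem hae
  have hInt : Integrable F G := by
    rw [← hres]
    exact hFcont.integrableOn_compact hcomp
  -- componentwise identity for the vector integral
  have hcomp_int : ∀ i : Fin n, (∫ θ, F θ ∂G) i = ∫ θ, f (Y i) θ ∂G := by
    intro i
    have := (ContinuousLinearMap.proj (R := ℝ) (φ := fun _ : Fin n => ℝ) i).integral_comp_comm hInt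
    exact this.symm
  -- the mixture vector lies in the closed convex hull of K, hence in D
  have hclosed : IsClosed (closure (convexHull ℝ K)) := isClosed_closure
  have hconv : Convex ℝ (closure (convexHull ℝ K)) := (convex_convexHull ℝ K).closure
  have hmem : (∫ θ, F θ ∂G) ∈ closure (convexHull ℝ K) := by
    apply hconv.integral_mem hclosed ?_ hInt
    filter_upwards [hae] with θ hθ
    exact subset_closure (subset_convexHull ℝ K ⟨θ, hθ, rfl⟩)
  have hmemD : (∫ θ, F θ ∂G) ∈ D := by
    have : closure (convexHull ℝ K) ⊆ D := by
      rw [hDcomp.isClosed.closure_subset_iff]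
      exact hhullD
    exact this hmem
  have hle : Φ v ≤ Φ (∫ θ, F θ ∂G) := hvmin hmemD
  have hvi : ∀ i : Fin n, ∑ s, q.1 s * f (Y i) (θs s) = v i := by
    intro i
    rw [← hqv]
    show ∑ s, q.1 s * f (Y i) (θs s) = (∑ s, q.1 s • q.2 s) i
    rw [Finset.sum_apply]
    refine Finset.sum_congr rfl fun s _ => ?_
    have : q.2 s = F (θs s) := (hθsF s).symm
    rw [this]
    simp [hFdef, Pi.smul_apply, smul_eq_mul]
  have hL : ∑ i, (g (Y i) - ∑ s, q.1 s * f (Y i) (θs s)) ^ 2 = Φ v := by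
    refine Finset.sum_congr rfl fun i _ => ?_
    rw [hvi i]
  have hR : ∑ i, (g (Y i) - ∫ θ, f (Y i) θ ∂G) ^ 2 = Φ (∫ θ, F θ ∂G) := by
    refine Finset.sum_congr rfl fun i _ => ?_
    rw [hcomp_int i]
  rw [hL, hR]
  exact mul_le_mul_of_nonneg_left hle (by positivity)
end

section
/- Let X be a metric space, let G₀ be a Borel probability measure on X, let ε > 0, and let B₁,…,B_S be pairwise disjoint Borel subsets of X with G₀(X \ (B₁ ∪ ⋯ ∪ B_S)) = 0 and with B_s contained in the open ball of radius ε around a point x_s ∈ X for each s. Let π = (π₁,…,π_S) be non-negative weights summing to 1 with Σ_{s=1}^S |π_s − G₀(B_s)| ≤ ε, and let G_S = Σ_{s=1}^S π_s δ_{x_s}. Then for every Borel set A ⊆ X, G_S(A) ≤ G₀(A^ε) + ε, where A^ε = {y ∈ X : dist(y, A) < ε} is the ε-thickening of A; consequently the Lévy–Prokhorov distance between G_S and G₀ is at most ε. -/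
open MeasureTheory Metric

/-- Quantitative covering step for Lévy–Prokhorov approximation.
If `B₁,…,B_S` are pairwise disjoint Borel sets of full `G₀`-measure, each contained
in an `ε`-ball around `x_s`, and the weights `π` are within total distance `ε` of the
`G₀`-masses of the `B_s`, then the discrete measure `G_S = Σ π_s δ_{x_s}` satisfies
`G_S(A) ≤ G₀(A^ε) + ε` for all Borel `A`, and hence `ρ(G_S, G₀) ≤ ε`. -/
theorem stmt_3 {X : Type*} [MetricSpace X] [MeasurableSpace X] [BorelSpace X]
    (G₀ : Measure X) [IsProbabilityMeasure G₀]
    (ε : ℝ) (hε : 0 < ε) (S : ℕ)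
    (B : Fin S → Set X) (x : Fin S → X)
    (hB : ∀ s, MeasurableSet (B s))
    (hdisj : Pairwise (Function.onFun Disjoint B))
    (hnull : G₀ ((⋃ s, B s)ᶜ) = 0)
    (hball : ∀ s, B s ⊆ ball (x s) ε)
    (π : Fin S → ℝ) (hπ0 : ∀ s, 0 ≤ π s) (hπ1 : ∑ s, π s = 1)
    (hclose : ∑ s, |π s - (G₀ (B s)).toReal| ≤ ε) :
    (∀ A : Set X, MeasurableSet A →
        (∑ s, (ENNReal.ofReal (π s)) • Measure.dirac (x s) : Measure X) A ≤
          G₀ (thickening ε A) + ENNReal.ofReal ε) ∧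
      levyProkhorovDist (∑ s, (ENNReal.ofReal (π s)) • Measure.dirac (x s)) G₀ ≤ ε := by
  classical
  set GS : Measure X := ∑ s, (ENNReal.ofReal (π s)) • Measure.dirac (x s) with hGS
  -- value of GS on measurable sets
  have hGSval : ∀ A : Set X, MeasurableSet A →
      GS A = ENNReal.ofReal (∑ s ∈ Finset.univ.filter (fun s => x s ∈ A), π s) := by
    intro A hA
    rw [hGS, Measure.finset_sum_apply, ENNReal.ofReal_sum_of_nonneg (fun s _ => hπ0 s),
      Finset.sum_filter]
    refine Finset.sum_congr rfl fun s _ => ?_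
    by_cases h : x s ∈ A
    · simp [Measure.dirac_apply' _ hA, Set.indicator_of_mem h, h]
    · simp [Measure.dirac_apply' _ hA, Set.indicator_of_notMem h, h]
  have hGSprob : IsProbabilityMeasure GS := by
    constructor
    rw [hGSval Set.univ MeasurableSet.univ]
    simp [hπ1]
  -- key one-sided bound
  have key : ∀ A : Set X, MeasurableSet A →
      GS A ≤ G₀ (thickening ε A) + ENNReal.ofReal ε := by
    intro A hA
    rw [hGSval A hA]
    set T := Finset.univ.filter (fun s => x s ∈ A) with hT
    have hsub : (⋃ s ∈ T, B s) ⊆ thickening ε A := by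
      intro y hy
      simp only [Set.mem_iUnion] at hy
      obtain ⟨s, hs, hys⟩ := hy
      have hxs : x s ∈ A := by simpa [hT] using hs
      have : dist y (x s) < ε := by simpa [mem_ball] using hball s hys
      rw [mem_thickening_iff]
      exact ⟨x s, hxs, this⟩
    have hmeas : G₀ (⋃ s ∈ T, B s) = ∑ s ∈ T, G₀ (B s) :=
      measure_biUnion_finset (hdisj.set_pairwise _) (fun s _ => hB s)
    have hsum1 : ∑ s ∈ T, π s ≤ ∑ s ∈ T, (G₀ (B s)).toReal + ε := by
      have h1 : ∑ s ∈ T, π s ≤ ∑ s ∈ T, ((G₀ (B s)).toReal + |π s - (G₀ (B s)).toReal|) := by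
        apply Finset.sum_le_sum
        intro s _
        have := le_abs_self (π s - (G₀ (B s)).toReal)
        linarith
      rw [Finset.sum_add_distrib] at h1
      have h2 : ∑ s ∈ T, |π s - (G₀ (B s)).toReal| ≤ ε :=
        le_trans (Finset.sum_le_sum_of_subset_of_nonneg (Finset.subset_univ T)
          (fun s _ _ => abs_nonneg _)) hclose
      linarith
    have hsum2 : ∑ s ∈ T, (G₀ (B s)).toReal = (G₀ (⋃ s ∈ T, B s)).toReal := by
      rw [hmeas, ENNReal.toReal_sum (fun s _ => measure_ne_top G₀ _)]
    have hsum3 : (G₀ (⋃ s ∈ T, B s)).toReal ≤ (G₀ (thickening ε A)).toReal := by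
      apply ENNReal.toReal_mono (measure_ne_top G₀ _)
      exact measure_mono hsub
    calc ENNReal.ofReal (∑ s ∈ T, π s)
        ≤ ENNReal.ofReal ((G₀ (thickening ε A)).toReal + ε) := by
          apply ENNReal.ofReal_le_ofReal; linarith
      _ = G₀ (thickening ε A) + ENNReal.ofReal ε := by
          rw [ENNReal.ofReal_add (ENNReal.toReal_nonneg) hε.le,
            ENNReal.ofReal_toReal (measure_ne_top G₀ _)]
  refine ⟨key, ?_⟩
  -- reverse one-sided bound for larger radii
  have key' : ∀ t : ℝ, ε ≤ t → ∀ A : Set X, MeasurableSet A →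
      G₀ A ≤ GS (thickening t A) + ENNReal.ofReal ε := by
    intro t ht A hA
    set C := (thickening t A)ᶜ with hC
    have hCmeas : MeasurableSet C := isOpen_thickening.measurableSet.compl
    have hdisjAC : Disjoint A (thickening ε C) := by
      rw [Set.disjoint_right]
      intro z hz
      rw [mem_thickening_iff] at hz
      obtain ⟨w, hwC, hzw⟩ := hz
      intro hzA
      apply hwC
      rw [mem_thickening_iff]
      exact ⟨z, hzA, lt_of_lt_of_le (by rwa [dist_comm]) ht⟩
    have h1 : GS C ≤ G₀ (thickening ε C) + ENNReal.ofReal ε := key C hCmeas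
    have h2 : G₀ A + G₀ (thickening ε C) ≤ 1 := by
      rw [← measure_union hdisjAC isOpen_thickening.measurableSet]
      exact prob_le_one
    have h3 : (1 : ENNReal) = GS C + GS (thickening t A) := by
      have := measure_add_measure_compl (μ := GS) hCmeas
      rw [hGSprob.measure_univ] at this
      rw [← this, hC, compl_compl]
    have h4 : G₀ A + G₀ (thickening ε C) ≤
        GS (thickening t A) + ENNReal.ofReal ε + G₀ (thickening ε C) := by
      calc G₀ A + G₀ (thickening ε C) ≤ 1 := h2
        _ = GS C + GS (thickening t A) := h3
        _ ≤ (G₀ (thickening ε C) + ENNReal.ofReal ε) + GS (thickening t A) :=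
            add_le_add_left h1 _
        _ = GS (thickening t A) + ENNReal.ofReal ε + G₀ (thickening ε C) := by ring
    exact (ENNReal.add_le_add_iff_right (measure_ne_top G₀ _)).mp h4
  -- conclude LP distance bound
  have hED : levyProkhorovEDist GS G₀ ≤ ENNReal.ofReal ε := by
    apply levyProkhorovEDist_le_of_forall
    intro η A hη hηtop hA
    have hηε : ε ≤ η.toReal := by
      have := ENNReal.toReal_mono hηtop.ne hη.le
      rwa [ENNReal.toReal_ofReal hε.le] at this
    have hεη : ENNReal.ofReal ε ≤ η := by
      rw [← ENNReal.ofReal_toReal hηtop.ne]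
      exact ENNReal.ofReal_le_ofReal hηε
    constructor
    · calc GS A ≤ G₀ (thickening ε A) + ENNReal.ofReal ε := key A hA
        _ ≤ G₀ (thickening η.toReal A) + η :=
            add_le_add (measure_mono (thickening_mono hηε A)) hεη
    · calc G₀ A ≤ GS (thickening η.toReal A) + ENNReal.ofReal ε := key' η.toReal hηε A hA
        _ ≤ GS (thickening η.toReal A) + η := add_le_add_right hεη _
  calc levyProkhorovDist GS G₀ = (levyProkhorovEDist GS G₀).toReal := rfl
    _ ≤ (ENNReal.ofReal ε).toReal := ENNReal.toReal_mono ENNReal.ofReal_ne_top hED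
    _ = ε := ENNReal.toReal_ofReal hε.le
end

section
/- Fix d ≥ 1, q > 0 and M > 0, and let φ(y;μ,qI_d) = (2πq)^{−d/2} exp(−‖y−μ‖²/(2q)) denote the d-dimensional spherical Gaussian density with mean μ and covariance qI_d. Then there exists a constant C < ∞ (depending only on d, q, M) such that for every Borel probability measure G₀ on [−M,M]^d and every integer S ≥ 1 there exists a probability measure G_S supported on at most S points of [−M,M]^d with sup_{y ∈ ℝ^d} | ∫ φ(y;μ,qI_d) dG_S(μ) − ∫ φ(y;μ,qI_d) dG₀(μ) | ≤ C · S^{−1/d}. -/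
open MeasureTheory

/-- The `d`-dimensional spherical Gaussian density with mean `μ` and covariance `q I_d`:
`φ(y;μ,qI_d) = (2πq)^{−d/2} exp(−‖y−μ‖²/(2q))`. -/
noncomputable def gaussDensity (d : ℕ) (q : ℝ) (μ y : EuclideanSpace ℝ (Fin d)) : ℝ :=
  (2 * Real.pi * q) ^ (-(d : ℝ) / 2) * Real.exp (-‖y - μ‖ ^ 2 / (2 * q))

section aux

lemma psi_hasDerivAt (q t : ℝ) :
    HasDerivAt (fun t : ℝ => Real.exp (-t ^ 2 / (2 * q)))
      ((-t / q) * Real.exp (-t ^ 2 / (2 * q))) t := by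
  have h1 : HasDerivAt (fun t : ℝ => -t ^ 2 / (2 * q)) (-(2 * t) / (2 * q)) t := by
    simpa using ((hasDerivAt_pow 2 t).neg.div_const (2 * q))
  have := h1.exp
  convert this using 1
  ring_nf

lemma deriv_bound (q : ℝ) (hq : 0 < q) (t : ℝ) :
    |(-t / q) * Real.exp (-t ^ 2 / (2 * q))| ≤ Real.sqrt (2 / q) := by
  have hexp_pos : 0 < Real.exp (-t ^ 2 / (2 * q)) := Real.exp_pos _
  have habs : |(-t / q) * Real.exp (-t ^ 2 / (2 * q))| =
      (|t| / q) * Real.exp (-t ^ 2 / (2 * q)) := by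
    rw [abs_mul, abs_div, abs_neg, abs_of_pos hq, abs_of_pos hexp_pos]
  rw [habs]
  have hsq : Real.sqrt (2 / q) = Real.sqrt (2 * q) / q := by
    rw [eq_div_iff (ne_of_gt hq), ← Real.sqrt_sq hq.le,
      ← Real.sqrt_mul (by positivity)]
    congr 1
    field_simp
    ring_nf; rw [Real.sq_sqrt (by positivity)]
  rcases le_or_gt (|t|) (Real.sqrt (2 * q)) with h | h
  · have h1 : Real.exp (-t ^ 2 / (2 * q)) ≤ 1 := by
      apply Real.exp_le_one_iff.mpr
      have h2 : (0:ℝ) ≤ t ^ 2 / (2 * q) := by positivity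
      rw [neg_div]; linarith
    calc |t| / q * Real.exp (-t ^ 2 / (2 * q)) ≤ |t| / q * 1 := by
          apply mul_le_mul_of_nonneg_left h1 (by positivity)
      _ = |t| / q := by ring
      _ ≤ Real.sqrt (2 * q) / q := by gcongr
      _ = Real.sqrt (2 / q) := hsq.symm
  · have ht0 : 0 < |t| := lt_trans (Real.sqrt_pos.mpr (by positivity)) h
    have ht2 : 0 < t ^ 2 := by
      have : t ≠ 0 := by simpa [abs_pos] using ht0
      positivity
    have h2 : 0 < t ^ 2 / (2 * q) := by positivity
    have h1 : t ^ 2 / (2 * q) ≤ Real.exp (t ^ 2 / (2 * q)) := by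
      linarith [Real.add_one_le_exp (t ^ 2 / (2 * q))]
    have hexp_le : Real.exp (-t ^ 2 / (2 * q)) ≤ 2 * q / t ^ 2 := by
      have h3 : 1 / Real.exp (t ^ 2 / (2 * q)) ≤ 1 / (t ^ 2 / (2 * q)) :=
        one_div_le_one_div_of_le h2 h1
      rw [neg_div, Real.exp_neg, inv_eq_one_div]
      calc 1 / Real.exp (t ^ 2 / (2 * q)) ≤ 1 / (t ^ 2 / (2 * q)) := h3
        _ = 2 * q / t ^ 2 := one_div_div _ _
    calc |t| / q * Real.exp (-t ^ 2 / (2 * q)) ≤ |t| / q * (2 * q / t ^ 2) := by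
          apply mul_le_mul_of_nonneg_left hexp_le (by positivity)
      _ = 2 / |t| := by
          have h4 : |t| * |t| = t ^ 2 := by rw [← abs_mul, abs_mul_self t]; ring
          field_simp
          rw [sq_abs, div_self (ne_of_gt ht2)]
      _ ≤ 2 / Real.sqrt (2 * q) := by gcongr
      _ = Real.sqrt (2 / q) := by
          rw [div_eq_iff (ne_of_gt (Real.sqrt_pos.mpr (by positivity : (0:ℝ) < 2 * q))),
            ← Real.sqrt_mul (by positivity)]
          rw [show 2 / q * (2 * q) = 4 by field_simp; ring]
          rw [show (4:ℝ) = 2 ^ 2 by norm_num, Real.sqrt_sq (by norm_num)]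

lemma psi_lip (q : ℝ) (hq : 0 < q) (a b : ℝ) :
    |Real.exp (-a ^ 2 / (2 * q)) - Real.exp (-b ^ 2 / (2 * q))| ≤
      Real.sqrt (2 / q) * |a - b| := by
  have := Convex.norm_image_sub_le_of_norm_hasDerivWithin_le
    (f := fun t : ℝ => Real.exp (-t ^ 2 / (2 * q)))
    (f' := fun t : ℝ => (-t / q) * Real.exp (-t ^ 2 / (2 * q)))
    (s := Set.univ) (C := Real.sqrt (2 / q))
    (fun x _ => (psi_hasDerivAt q x).hasDerivWithinAt)
    (fun x _ => by rw [Real.norm_eq_abs]; exact deriv_bound q hq x)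
    convex_univ (Set.mem_univ b) (Set.mem_univ a)
  simpa [Real.norm_eq_abs] using this

lemma gauss_lip (d : ℕ) (q : ℝ) (hq : 0 < q) (y μ μ' : EuclideanSpace ℝ (Fin d)) :
    |gaussDensity d q μ y - gaussDensity d q μ' y| ≤
      (2 * Real.pi * q) ^ (-(d : ℝ) / 2) * Real.sqrt (2 / q) * ‖μ - μ'‖ := by
  have hc : (0:ℝ) < (2 * Real.pi * q) ^ (-(d : ℝ) / 2) :=
    Real.rpow_pos_of_pos (by have := Real.pi_pos; positivity) _
  have h1 : |Real.exp (-‖y - μ‖ ^ 2 / (2 * q)) - Real.exp (-‖y - μ'‖ ^ 2 / (2 * q))| ≤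
      Real.sqrt (2 / q) * ‖μ - μ'‖ := by
    refine le_trans (psi_lip q hq _ _) ?_
    gcongr
    have := abs_norm_sub_norm_le (y - μ) (y - μ')
    calc |‖y - μ‖ - ‖y - μ'‖| ≤ ‖(y - μ) - (y - μ')‖ := this
      _ = ‖μ' - μ‖ := by congr 1; abel
      _ = ‖μ - μ'‖ := by rw [norm_sub_rev]
  unfold gaussDensity
  rw [← mul_sub, abs_mul, abs_of_pos hc]
  exact (mul_le_mul_of_nonneg_left h1 hc.le).trans_eq (by ring)

lemma gauss_le (d : ℕ) (q : ℝ) (hq : 0 < q) (y μ : EuclideanSpace ℝ (Fin d)) :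
    |gaussDensity d q μ y| ≤ (2 * Real.pi * q) ^ (-(d : ℝ) / 2) := by
  have hc : (0:ℝ) < (2 * Real.pi * q) ^ (-(d : ℝ) / 2) :=
    Real.rpow_pos_of_pos (by have := Real.pi_pos; positivity) _
  unfold gaussDensity
  rw [abs_mul, abs_of_pos hc, abs_of_pos (Real.exp_pos _)]
  have h1 : Real.exp (-‖y - μ‖ ^ 2 / (2 * q)) ≤ 1 := by
    apply Real.exp_le_one_iff.mpr
    have h2 : (0:ℝ) ≤ ‖y - μ‖ ^ 2 / (2 * q) := by positivity
    rw [neg_div]; linarith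
  calc (2 * Real.pi * q) ^ (-(d : ℝ) / 2) * Real.exp (-‖y - μ‖ ^ 2 / (2 * q)) ≤
      (2 * Real.pi * q) ^ (-(d : ℝ) / 2) * 1 := mul_le_mul_of_nonneg_left h1 hc.le
    _ = _ := mul_one _

noncomputable def roundCoord (M h : ℝ) (N : ℕ) (x : ℝ) : ℝ :=
  -M + h * (min ⌊(x + M) / h⌋₊ (N - 1) : ℕ)

lemma roundCoord_measurable (M h : ℝ) (N : ℕ) : Measurable (roundCoord M h N) := by
  have : roundCoord M h N =
      (fun n : ℕ => -M + h * (min n (N - 1) : ℕ)) ∘ (fun x : ℝ => ⌊(x + M) / h⌋₊) := rfl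
  rw [this]
  exact measurable_from_top.comp
    (Nat.measurable_floor.comp ((measurable_id.add_const M).div_const h))

lemma cast_min_le (N : ℕ) (hN : 1 ≤ N) (m : ℕ) :
    ((min m (N - 1) : ℕ) : ℝ) ≤ (N : ℝ) - 1 := by
  have hk : (min m (N - 1) : ℕ) ≤ N - 1 := min_le_right _ _
  have hkr : ((min m (N - 1) : ℕ) : ℝ) ≤ ((N - 1 : ℕ) : ℝ) := Nat.cast_le.mpr hk
  rwa [Nat.cast_sub hN, Nat.cast_one] at hkr

lemma roundCoord_mem (M h : ℝ) (N : ℕ) (hM : 0 < M) (hN : 1 ≤ N) (hh : h = 2 * M / N)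
    (x : ℝ) : roundCoord M h N x ∈ Set.Icc (-M) M := by
  have hN0 : (0:ℝ) < N := by exact_mod_cast hN
  have hhpos : 0 < h := by rw [hh]; positivity
  have hkr := cast_min_le N hN ⌊(x + M) / h⌋₊
  have hhN : h * (N:ℝ) = 2 * M := by rw [hh]; field_simp
  constructor
  · unfold roundCoord
    nlinarith [(Nat.cast_nonneg (min ⌊(x + M) / h⌋₊ (N - 1)) : (0:ℝ) ≤ _)]
  · unfold roundCoord
    have : h * ((min ⌊(x + M) / h⌋₊ (N - 1) : ℕ) : ℝ) ≤ h * ((N:ℝ) - 1) :=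
      mul_le_mul_of_nonneg_left hkr hhpos.le
    nlinarith

lemma roundCoord_close (M h : ℝ) (N : ℕ) (hM : 0 < M) (hN : 1 ≤ N) (hh : h = 2 * M / N)
    (x : ℝ) (hx : x ∈ Set.Icc (-M) M) : |roundCoord M h N x - x| ≤ h := by
  have hN0 : (0:ℝ) < N := by exact_mod_cast hN
  have hhpos : 0 < h := by rw [hh]; positivity
  have hhN : h * (N:ℝ) = 2 * M := by rw [hh]; field_simp
  obtain ⟨hx1, hx2⟩ := hx
  have hu0 : 0 ≤ (x + M) / h := by
    apply div_nonneg _ hhpos.le; linarith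
  set k : ℕ := min ⌊(x + M) / h⌋₊ (N - 1) with hkdef
  have huu : h * ((x + M) / h) = x + M := by field_simp
  have hup : h * (k:ℝ) ≤ x + M := by
    have h1 : (k:ℝ) ≤ (x + M) / h :=
      le_trans (Nat.cast_le.mpr (min_le_left _ _)) (Nat.floor_le hu0)
    calc h * (k:ℝ) ≤ h * ((x + M) / h) := mul_le_mul_of_nonneg_left h1 hhpos.le
      _ = x + M := huu
  have hlow : x + M ≤ h * (k:ℝ) + h := by
    rcases le_or_gt ⌊(x + M) / h⌋₊ (N - 1) with hc | hc
    · have hk_eq : k = ⌊(x + M) / h⌋₊ := min_eq_left hc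
      have h2 : (x + M) / h < (k:ℝ) + 1 := by
        rw [hk_eq]; exact_mod_cast Nat.lt_floor_add_one ((x + M) / h)
      have h3 : h * ((x + M) / h) ≤ h * ((k:ℝ) + 1) :=
        mul_le_mul_of_nonneg_left h2.le hhpos.le
      rw [huu] at h3; linarith
    · have hk_eq : k = N - 1 := min_eq_right hc.le
      have hkr : (k:ℝ) = (N:ℝ) - 1 := by
        rw [hk_eq, Nat.cast_sub hN, Nat.cast_one]
      rw [hkr]; nlinarith
  have hr : roundCoord M h N x = -M + h * (k:ℝ) := rfl
  rw [hr, abs_le]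
  constructor <;> [linarith; linarith]

lemma euclid_norm_le (d : ℕ) (x : EuclideanSpace ℝ (Fin d)) (h : ℝ) (hh : 0 ≤ h)
    (hx : ∀ i, |x i| ≤ h) : ‖x‖ ≤ Real.sqrt d * h := by
  rw [EuclideanSpace.norm_eq]
  have hs : ∑ i, ‖x i‖ ^ 2 ≤ (d : ℝ) * h ^ 2 := by
    calc ∑ i, ‖x i‖ ^ 2 ≤ ∑ _i : Fin d, h ^ 2 := by
          apply Finset.sum_le_sum
          intro i _
          rw [Real.norm_eq_abs]
          exact pow_le_pow_left₀ (abs_nonneg _) (hx i) 2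
      _ = (d : ℝ) * h ^ 2 := by
          simp [Finset.sum_const, Finset.card_univ, nsmul_eq_mul]
  calc Real.sqrt (∑ i, ‖x i‖ ^ 2) ≤ Real.sqrt ((d:ℝ) * h ^ 2) := Real.sqrt_le_sqrt hs
    _ = Real.sqrt d * h := by
        rw [Real.sqrt_mul (Nat.cast_nonneg d), Real.sqrt_sq hh]

end aux

/-- Uniform approximation of spherical Gaussian location mixtures by
finite mixtures: any mixture with mixing measure supported on `[−M,M]^d` is uniformly
approximated at rate `S^{−1/d}` by an `S`-point mixture. -/
theorem stmt_6 (d : ℕ) (hd : 1 ≤ d) (q M : ℝ) (hq : 0 < q) (hM : 0 < M) :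
    ∃ C : ℝ, ∀ G₀ : Measure (EuclideanSpace ℝ (Fin d)), IsProbabilityMeasure G₀ →
      G₀ ({x : EuclideanSpace ℝ (Fin d) | ∀ i, x i ∈ Set.Icc (-M) M}ᶜ) = 0 →
      ∀ S : ℕ, 1 ≤ S →
        ∃ (GS : Measure (EuclideanSpace ℝ (Fin d)))
            (T : Finset (EuclideanSpace ℝ (Fin d))),
          IsProbabilityMeasure GS ∧ T.card ≤ S ∧
          (↑T : Set (EuclideanSpace ℝ (Fin d))) ⊆
            {x : EuclideanSpace ℝ (Fin d) | ∀ i, x i ∈ Set.Icc (-M) M} ∧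
          GS ((↑T : Set (EuclideanSpace ℝ (Fin d)))ᶜ) = 0 ∧
          ∀ y : EuclideanSpace ℝ (Fin d),
            |(∫ μ, gaussDensity d q μ y ∂GS) - ∫ μ, gaussDensity d q μ y ∂G₀| ≤
              C * (S : ℝ) ^ (-(1 : ℝ) / d) := by
  classical
  set L : ℝ := (2 * Real.pi * q) ^ (-(d : ℝ) / 2) * Real.sqrt (2 / q) with hL
  have hLpos : 0 < L := by
    apply mul_pos (Real.rpow_pos_of_pos (by have := Real.pi_pos; positivity) _)
    exact Real.sqrt_pos.mpr (by positivity)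
  refine ⟨L * Real.sqrt d * (4 * M), ?_⟩
  intro G₀ hG₀ hsupp S hS
  -- set up the grid
  set N : ℕ := ⌊(S : ℝ) ^ ((1:ℝ) / d)⌋₊ with hNdef
  have hd0 : (0:ℝ) < d := by exact_mod_cast hd
  have hS1 : (1:ℝ) ≤ (S:ℝ) := by exact_mod_cast hS
  have hSpow1 : (1:ℝ) ≤ (S : ℝ) ^ ((1:ℝ) / d) :=
    Real.one_le_rpow hS1 (by positivity)
  have hN1 : 1 ≤ N := Nat.le_floor (by exact_mod_cast hSpow1)
  have hN0 : (0:ℝ) < N := by exact_mod_cast hN1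
  have hNle : (N : ℝ) ≤ (S : ℝ) ^ ((1:ℝ) / d) := Nat.floor_le (by positivity)
  have hNS : N ^ d ≤ S := by
    have h1 : ((N : ℝ)) ^ (d:ℕ) ≤ ((S : ℝ) ^ ((1:ℝ) / d)) ^ (d:ℕ) :=
      pow_le_pow_left₀ hN0.le hNle d
    have h2 : ((S : ℝ) ^ ((1:ℝ) / d)) ^ (d:ℕ) = (S : ℝ) := by
      rw [← Real.rpow_natCast ((S : ℝ) ^ ((1:ℝ) / d)) d, ← Real.rpow_mul (by positivity)]
      rw [one_div_mul_cancel (ne_of_gt hd0), Real.rpow_one]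
    rw [h2] at h1
    exact_mod_cast h1
  have hNS2 : 1 / (N : ℝ) ≤ 2 * (S : ℝ) ^ (-(1:ℝ) / d) := by
    have h1 : (S : ℝ) ^ ((1:ℝ) / d) < (N : ℝ) + 1 := Nat.lt_floor_add_one _
    have h2 : (S : ℝ) ^ ((1:ℝ) / d) ≤ 2 * N := by
      have hN1' : (1:ℝ) ≤ (N:ℝ) := by exact_mod_cast hN1
      have : (N:ℝ) + 1 ≤ 2 * N := by linarith
      linarith
    have hSpow0 : (0:ℝ) < (S : ℝ) ^ ((1:ℝ) / d) := by positivity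
    have h3 : 1 / (2 * (N:ℝ)) ≤ 1 / ((S : ℝ) ^ ((1:ℝ) / d)) :=
      one_div_le_one_div_of_le hSpow0 h2
    have h4 : (S : ℝ) ^ (-(1:ℝ) / d) = 1 / ((S : ℝ) ^ ((1:ℝ) / d)) := by
      rw [neg_div, Real.rpow_neg (by positivity), inv_eq_one_div]
    rw [h4]
    calc 1 / (N:ℝ) = 2 * (1 / (2 * (N:ℝ))) := by field_simp
      _ ≤ 2 * (1 / ((S : ℝ) ^ ((1:ℝ) / d))) := by linarith
  set h : ℝ := 2 * M / N with hhdef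
  have hhpos : 0 < h := by rw [hhdef]; positivity
  -- the rounding map
  set g : EuclideanSpace ℝ (Fin d) → EuclideanSpace ℝ (Fin d) :=
    fun x => (WithLp.toLp 2 (fun i => roundCoord M h N (x i)) : EuclideanSpace ℝ (Fin d)) with hgdef
  have hgmeas : Measurable g := by
    apply (WithLp.measurable_toLp _ _).comp
    apply measurable_pi_lambda
    intro i
    exact (roundCoord_measurable M h N).comp ((measurable_pi_apply i).comp (WithLp.measurable_ofLp _ _))
  -- the grid finset
  set T : Finset (EuclideanSpace ℝ (Fin d)) :=
    Finset.image
      (fun k : Fin d → Fin N => (WithLp.toLp 2 (fun i => -M + h * ((k i : ℕ) : ℝ)) : EuclideanSpace ℝ (Fin d)))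
      Finset.univ with hTdef
  have hrangeT : ∀ x, g x ∈ T := by
    intro x
    rw [hTdef]
    apply Finset.mem_image.mpr
    refine ⟨fun i => ⟨min ⌊(x i + M) / h⌋₊ (N - 1), by omega⟩, Finset.mem_univ _, ?_⟩
    rfl
  set GS : Measure (EuclideanSpace ℝ (Fin d)) := Measure.map g G₀ with hGSdef
  have hGSprob : IsProbabilityMeasure GS := Measure.isProbabilityMeasure_map hgmeas.aemeasurable
  refine ⟨GS, T, hGSprob, ?_, ?_, ?_, ?_⟩
  · -- card
    calc T.card ≤ (Finset.univ : Finset (Fin d → Fin N)).card := Finset.card_image_le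
      _ = N ^ d := by simp [Finset.card_univ]
      _ ≤ S := hNS
  · -- T in the cube
    intro x hx
    rw [hTdef] at hx
    simp only [Finset.coe_image, Set.mem_image] at hx
    obtain ⟨k, _, rfl⟩ := hx
    intro i
    have hki : ((k i : ℕ) : ℝ) ≤ (N : ℝ) - 1 := by
      have h1 : (k i : ℕ) + 1 ≤ N := (k i).2
      have := (Nat.cast_le (α := ℝ)).mpr h1
      push_cast at this
      linarith
    have hhN : h * (N:ℝ) = 2 * M := by rw [hhdef]; field_simp
    constructor
    · have : (0:ℝ) ≤ h * ((k i : ℕ) : ℝ) := by positivity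
      show -M ≤ -M + h * ((k i : ℕ) : ℝ)
      linarith
    · show -M + h * ((k i : ℕ) : ℝ) ≤ M
      nlinarith [mul_le_mul_of_nonneg_left hki hhpos.le]
  · -- GS of complement of T is 0
    have hTm : MeasurableSet ((↑T : Set (EuclideanSpace ℝ (Fin d)))ᶜ) :=
      T.finite_toSet.measurableSet.compl
    rw [hGSdef, Measure.map_apply hgmeas hTm]
    have : g ⁻¹' ((↑T : Set (EuclideanSpace ℝ (Fin d)))ᶜ) = ∅ := by
      ext x
      simp only [Set.mem_preimage, Set.mem_compl_iff, Finset.mem_coe, Set.mem_empty_iff_false,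
        iff_false, not_not]
      exact hrangeT x
    rw [this, measure_empty]
  · -- the uniform bound
    intro y
    have hFcont : Continuous (fun μ : EuclideanSpace ℝ (Fin d) => gaussDensity d q μ y) := by
      unfold gaussDensity
      fun_prop
    have hmap : (∫ μ, gaussDensity d q μ y ∂GS) = ∫ μ, gaussDensity d q (g μ) y ∂G₀ := by
      rw [hGSdef]
      exact integral_map hgmeas.aemeasurable hFcont.aestronglyMeasurable
    have hbd : ∀ μ, ‖gaussDensity d q μ y‖ ≤ (2 * Real.pi * q) ^ (-(d : ℝ) / 2) :=
      fun μ => by rw [Real.norm_eq_abs]; exact gauss_le d q hq y μ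
    have hint2 : Integrable (fun μ => gaussDensity d q μ y) G₀ := by
      apply Integrable.mono' (integrable_const ((2 * Real.pi * q) ^ (-(d : ℝ) / 2)))
        hFcont.aestronglyMeasurable
      filter_upwards with μ using hbd μ
    have hint1 : Integrable (fun μ => gaussDensity d q (g μ) y) G₀ := by
      apply Integrable.mono' (integrable_const ((2 * Real.pi * q) ^ (-(d : ℝ) / 2)))
        ((hFcont.measurable.comp hgmeas).aestronglyMeasurable)
      filter_upwards with μ using hbd (g μ)
    rw [hmap, ← integral_sub hint1 hint2]
    have hae : ∀ᵐ μ ∂G₀,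
        ‖gaussDensity d q (g μ) y - gaussDensity d q μ y‖ ≤
          L * Real.sqrt d * (4 * M) * (S : ℝ) ^ (-(1:ℝ) / d) := by
      have hA : {x : EuclideanSpace ℝ (Fin d) | ∀ i, x i ∈ Set.Icc (-M) M} ∈ ae G₀ :=
        mem_ae_iff.mpr hsupp
      filter_upwards [hA] with μ hμ
      rw [Real.norm_eq_abs]
      have hclose : ‖g μ - μ‖ ≤ Real.sqrt d * h := by
        apply euclid_norm_le d (g μ - μ) h hhpos.le
        intro i
        have : (g μ - μ) i = roundCoord M h N (μ i) - μ i := by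
          simp [hgdef]
        rw [this]
        exact roundCoord_close M h N hM hN1 hhdef (μ i) (hμ i)
      calc |gaussDensity d q (g μ) y - gaussDensity d q μ y| ≤ L * ‖g μ - μ‖ :=
            gauss_lip d q hq y (g μ) μ
        _ ≤ L * (Real.sqrt d * h) := mul_le_mul_of_nonneg_left hclose hLpos.le
        _ ≤ L * Real.sqrt d * (4 * M) * (S : ℝ) ^ (-(1:ℝ) / d) := by
            have hh4 : h ≤ 4 * M * (S : ℝ) ^ (-(1:ℝ) / d) := by
              have : h = 2 * M * (1 / (N:ℝ)) := by rw [hhdef]; field_simp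
              rw [this]
              calc 2 * M * (1 / (N:ℝ)) ≤ 2 * M * (2 * (S : ℝ) ^ (-(1:ℝ) / d)) := by
                    apply mul_le_mul_of_nonneg_left hNS2 (by positivity)
                _ = 4 * M * (S : ℝ) ^ (-(1:ℝ) / d) := by ring
            have hsd : (0:ℝ) ≤ Real.sqrt d := Real.sqrt_nonneg _
            calc L * (Real.sqrt d * h) ≤
                L * (Real.sqrt d * (4 * M * (S : ℝ) ^ (-(1:ℝ) / d))) := by
                  apply mul_le_mul_of_nonneg_left _ hLpos.le
                  exact mul_le_mul_of_nonneg_left hh4 hsd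
              _ = L * Real.sqrt d * (4 * M) * (S : ℝ) ^ (-(1:ℝ) / d) := by ring
    have := norm_integral_le_of_norm_le_const hae
    simpa [Real.norm_eq_abs, measure_univ] using this
end

section
/- Let u : ℝ^d → ℝ be Lebesgue-integrable and define g(x) = ∫_{ℝ^d} 1{ t_j < x_j for all j = 1,…,d } u(t) dt. Then for any two Borel probability measures μ and ν on ℝ^d, | ∫ g dμ − ∫ g dν | ≤ ( ∫_{ℝ^d} |u(t)| dt ) · sup_{t ∈ ℝ^d} | μ({x : x_j > t_j for all j}) − ν({x : x_j > t_j for all j}) |. -/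
open MeasureTheory

/-- If `g` is the iterated antiderivative
`g(x) = ∫ 1{t_j < x_j ∀j} u(t) dt` of an integrable function `u`, then for Borel
probability measures `μ, ν`, the difference `|∫ g dμ − ∫ g dν|` is bounded by
`(∫|u|)` times the uniform distance between the upper-orthant distribution
functions of `μ` and `ν`. -/
theorem stmt_10 {d : ℕ} (u : EuclideanSpace ℝ (Fin d) → ℝ) (hu : Integrable u)
    (μ ν : Measure (EuclideanSpace ℝ (Fin d)))
    [IsProbabilityMeasure μ] [IsProbabilityMeasure ν] :
    |(∫ x, (∫ t, ({s : EuclideanSpace ℝ (Fin d) | ∀ j, s j < x j}).indicator u t) ∂μ) -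
        ∫ x, (∫ t, ({s : EuclideanSpace ℝ (Fin d) | ∀ j, s j < x j}).indicator u t) ∂ν| ≤
      (∫ t, |u t|) *
        ⨆ t : EuclideanSpace ℝ (Fin d),
          |(μ {x | ∀ j, t j < x j}).toReal - (ν {x | ∀ j, t j < x j}).toReal| := by
  have hcoord : ∀ j : Fin d, Measurable (fun x : EuclideanSpace ℝ (Fin d) => x j) := fun j =>
    (EuclideanSpace.proj j).continuous.measurable
  have hS : ∀ t : EuclideanSpace ℝ (Fin d),
      MeasurableSet {x : EuclideanSpace ℝ (Fin d) | ∀ j, t j < x j} := by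
    intro t
    have : {x : EuclideanSpace ℝ (Fin d) | ∀ j, t j < x j} = ⋂ j, {x | t j < x j} := by
      ext x; simp
    rw [this]
    exact MeasurableSet.iInter fun j => measurableSet_lt measurable_const (hcoord j)
  have hT : MeasurableSet
      {p : EuclideanSpace ℝ (Fin d) × EuclideanSpace ℝ (Fin d) | ∀ j, p.1 j < p.2 j} := by
    have : {p : EuclideanSpace ℝ (Fin d) × EuclideanSpace ℝ (Fin d) | ∀ j, p.1 j < p.2 j}
        = ⋂ j, {p | p.1 j < p.2 j} := by ext p; simp
    rw [this]
    exact MeasurableSet.iInter fun j =>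
      measurableSet_lt ((hcoord j).comp measurable_fst) ((hcoord j).comp measurable_snd)
  have hT' : MeasurableSet
      {p : EuclideanSpace ℝ (Fin d) × EuclideanSpace ℝ (Fin d) | ∀ j, p.2 j < p.1 j} := by
    have : {p : EuclideanSpace ℝ (Fin d) × EuclideanSpace ℝ (Fin d) | ∀ j, p.2 j < p.1 j}
        = ⋂ j, {p | p.2 j < p.1 j} := by ext p; simp
    rw [this]
    exact MeasurableSet.iInter fun j =>
      measurableSet_lt ((hcoord j).comp measurable_snd) ((hcoord j).comp measurable_fst)
  -- measurability of the upper-orthant distribution function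
  have hFm : ∀ (m : Measure (EuclideanSpace ℝ (Fin d))) [SigmaFinite m],
      Measurable (fun t : EuclideanSpace ℝ (Fin d) => m {x | ∀ j, t j < x j}) := by
    intro m _
    exact measurable_measure_prodMk_left (ν := m) hT
  -- Fubini step
  have key : ∀ (m : Measure (EuclideanSpace ℝ (Fin d))) [IsProbabilityMeasure m],
      (∫ x, (∫ t, ({s : EuclideanSpace ℝ (Fin d) | ∀ j, s j < x j}).indicator u t) ∂m)
        = ∫ t, (m {x | ∀ j, t j < x j}).toReal * u t := by
    intro m _
    have hmp : MeasurePreserving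
        (Prod.snd : EuclideanSpace ℝ (Fin d) × EuclideanSpace ℝ (Fin d) → _)
        (m.prod volume) volume :=
      ⟨measurable_snd, by rw [Measure.map_snd_prod]; simp⟩
    have husnd : Integrable
        (fun p : EuclideanSpace ℝ (Fin d) × EuclideanSpace ℝ (Fin d) => u p.2)
        (m.prod volume) :=
      (hmp.integrable_comp hu.aestronglyMeasurable).mpr hu
    have heq : (fun p : EuclideanSpace ℝ (Fin d) × EuclideanSpace ℝ (Fin d) =>
        ({s : EuclideanSpace ℝ (Fin d) | ∀ j, s j < p.1 j}).indicator u p.2)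
        = {p : EuclideanSpace ℝ (Fin d) × EuclideanSpace ℝ (Fin d) |
            ∀ j, p.2 j < p.1 j}.indicator (fun p => u p.2) := by
      ext p
      by_cases h : ∀ j, p.2 j < p.1 j <;> simp [Set.indicator, h]
    have hint : Integrable
        (fun p : EuclideanSpace ℝ (Fin d) × EuclideanSpace ℝ (Fin d) =>
          ({s : EuclideanSpace ℝ (Fin d) | ∀ j, s j < p.1 j}).indicator u p.2)
        (m.prod volume) := by
      rw [heq]; exact husnd.indicator hT'
    rw [integral_integral_swap hint]
    congr 1 with t
    have hx : (fun x : EuclideanSpace ℝ (Fin d) =>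
        ({s : EuclideanSpace ℝ (Fin d) | ∀ j, s j < x j}).indicator u t)
        = {x : EuclideanSpace ℝ (Fin d) | ∀ j, t j < x j}.indicator (fun _ => u t) := by
      ext x
      by_cases h : ∀ j, t j < x j <;> simp [Set.indicator, h]
    rw [hx, integral_indicator_const _ (hS t), smul_eq_mul]; rfl
  rw [key μ, key ν]
  have hle1 : ∀ (m : Measure (EuclideanSpace ℝ (Fin d))) [IsProbabilityMeasure m]
      (t : EuclideanSpace ℝ (Fin d)), (m {x | ∀ j, t j < x j}).toReal ≤ 1 := by
    intro m _ t
    have h := prob_le_one (μ := m) (s := {x | ∀ j, t j < x j})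
    simpa using ENNReal.toReal_mono (by norm_num) h
  have hprod : ∀ (m : Measure (EuclideanSpace ℝ (Fin d))) [IsProbabilityMeasure m],
      Integrable (fun t : EuclideanSpace ℝ (Fin d) =>
        (m {x | ∀ j, t j < x j}).toReal * u t) := by
    intro m _
    refine Integrable.mono hu.abs
      (((hFm m).ennreal_toReal.aestronglyMeasurable).mul hu.aestronglyMeasurable) ?_
    filter_upwards with t
    simp only [Real.norm_eq_abs, abs_mul, abs_abs, abs_of_nonneg ENNReal.toReal_nonneg]
    calc (m {x | ∀ j, t j < x j}).toReal * |u t| ≤ 1 * |u t| :=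
          mul_le_mul_of_nonneg_right (hle1 m t) (abs_nonneg _)
      _ = |u t| := one_mul _
  rw [← integral_sub (hprod μ) (hprod ν)]
  set M := ⨆ t : EuclideanSpace ℝ (Fin d),
      |(μ {x | ∀ j, t j < x j}).toReal - (ν {x | ∀ j, t j < x j}).toReal| with hM
  have hbdd : BddAbove (Set.range fun t : EuclideanSpace ℝ (Fin d) =>
      |(μ {x | ∀ j, t j < x j}).toReal - (ν {x | ∀ j, t j < x j}).toReal|) := by
    refine ⟨2, ?_⟩
    rintro r ⟨t, rfl⟩
    have habs := abs_sub ((μ {x | ∀ j, t j < x j}).toReal) ((ν {x | ∀ j, t j < x j}).toReal)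
    rw [abs_of_nonneg ENNReal.toReal_nonneg, abs_of_nonneg ENNReal.toReal_nonneg] at habs
    have := hle1 μ t
    have := hle1 ν t
    linarith
  have hMle : ∀ t : EuclideanSpace ℝ (Fin d),
      |(μ {x | ∀ j, t j < x j}).toReal - (ν {x | ∀ j, t j < x j}).toReal| ≤ M :=
    fun t => le_ciSup hbdd t
  calc |∫ t, ((μ {x | ∀ j, t j < x j}).toReal * u t - (ν {x | ∀ j, t j < x j}).toReal * u t)|
      ≤ ∫ t, |((μ {x | ∀ j, t j < x j}).toReal - (ν {x | ∀ j, t j < x j}).toReal) * u t| := by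
        have h : ∀ t : EuclideanSpace ℝ (Fin d),
            (μ {x | ∀ j, t j < x j}).toReal * u t - (ν {x | ∀ j, t j < x j}).toReal * u t
            = ((μ {x | ∀ j, t j < x j}).toReal - (ν {x | ∀ j, t j < x j}).toReal) * u t :=
          fun t => by ring
        simp_rw [h]
        simpa only [Real.norm_eq_abs] using norm_integral_le_integral_norm (μ := volume)
          (fun t : EuclideanSpace ℝ (Fin d) =>
            ((μ {x | ∀ j, t j < x j}).toReal - (ν {x | ∀ j, t j < x j}).toReal) * u t)
    _ ≤ ∫ t, |u t| * M := by
        refine integral_mono_of_nonneg (Filter.Eventually.of_forall fun t => abs_nonneg _)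
          (hu.abs.mul_const M) (Filter.Eventually.of_forall fun t => ?_)
        dsimp only
        rw [abs_mul, mul_comm]
        exact mul_le_mul_of_nonneg_left (hMle t) (abs_nonneg _)
    _ = (∫ t, |u t|) * M := integral_mul_const M _
end
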